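/- A vector field F analytic at the origin of ℝ², expressed in polar components, has Fourier coefficients of the form F_r^m(r) = r^{|m−1|} p_r(r²), F_θ^m(r) = r^{|m−1|} p_θ(r²) for polynomials p_r, p_θ (where m−1 may be replaced by m+1 depending on sign conventions); equivalently, the combinations F_r^m ± i F_θ^m satisfy the scalar regularity condition with azimuthal indices m∓1. -/

import Mathlib

open MeasureTheory intervalIntegral

open scoped NNReal ENNReal


lemma int_exp_zero (k : ℤ) (hk : k ≠ 0) :
    ∫ θ in (0:ℝ)..(2*Real.pi), Complex.exp ((k:ℂ) * Complex.I * θ) = 0 := by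
  have hc : (k:ℂ) * Complex.I ≠ 0 :=
    mul_ne_zero (by exact_mod_cast hk) Complex.I_ne_zero
  rw [show (fun θ : ℝ => Complex.exp ((k:ℂ) * Complex.I * θ)) = fun θ : ℝ =>
    Complex.exp (((k:ℂ) * Complex.I) * θ) from rfl, integral_exp_mul_complex hc]
  have h1 : Complex.exp ((k:ℂ) * Complex.I * ((2*Real.pi : ℝ):ℂ)) = 1 := by
    rw [show (k:ℂ) * Complex.I * ((2*Real.pi : ℝ):ℂ) = (k:ℤ) * (2 * Real.pi * Complex.I) by push_cast; ring]
    exact Complex.exp_int_mul_two_pi_mul_I k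
  rw [h1]
  simp

lemma cont_prod_trig {n : ℕ} (a : Fin n → ℝ → ℝ)
    (ha : ∀ i, a i = Real.cos ∨ a i = Real.sin) :
    Continuous fun θ : ℝ => ∏ i, ((a i θ : ℝ) : ℂ) := by
  apply continuous_finset_prod
  intro i _
  rcases ha i with h | h <;> rw [h]
  · exact Complex.continuous_ofReal.comp Real.continuous_cos
  · exact Complex.continuous_ofReal.comp Real.continuous_sin

lemma trig_orth (n : ℕ) (a : Fin n → ℝ → ℝ)
    (ha : ∀ i, a i = Real.cos ∨ a i = Real.sin) (m : ℤ)
    (hm : ∀ t : ℕ, t ≤ n → 2*(t:ℤ) - n ≠ m) :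
    ∫ θ in (0:ℝ)..(2*Real.pi),
      (∏ i, ((a i θ : ℝ):ℂ)) * Complex.exp (-(m:ℂ)*Complex.I*θ) = 0 := by
  induction n generalizing m with
  | zero =>
    have hm0 : m ≠ 0 := by
      intro h; exact hm 0 le_rfl (by simp [h])
    have := int_exp_zero (-m) (neg_ne_zero.mpr hm0)
    simp only [Finset.univ_eq_empty, Finset.prod_empty, one_mul]
    rw [show (fun θ:ℝ => Complex.exp (-(m:ℂ)*Complex.I*θ)) = fun θ:ℝ =>
      Complex.exp (((-m:ℤ):ℂ) * Complex.I * θ) by push_cast; rfl]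
    exact this
  | succ n ih =>
    set b : Fin n → ℝ → ℝ := fun i => a i.succ with hbdef
    have hb : ∀ i, b i = Real.cos ∨ b i = Real.sin := fun i => ha i.succ
    obtain ⟨α, β, hab⟩ : ∃ α β : ℂ, ∀ θ : ℝ,
        ((a 0 θ : ℝ):ℂ) = α * Complex.exp ((θ:ℂ)*Complex.I) +
          β * Complex.exp (-(θ:ℂ)*Complex.I) := by
      rcases ha 0 with h | h <;> rw [h]
      · exact ⟨1/2, 1/2, fun θ => by
          rw [Complex.ofReal_cos, Complex.cos]; ring⟩
      · exact ⟨-Complex.I/2, Complex.I/2, fun θ => by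
          rw [Complex.ofReal_sin, Complex.sin]; ring⟩
    have hcont : Continuous fun θ : ℝ => ∏ i, ((b i θ : ℝ):ℂ) := cont_prod_trig b hb
    have key : ∀ θ : ℝ, (∏ i, ((a i θ : ℝ):ℂ)) * Complex.exp (-(m:ℂ)*Complex.I*θ)
        = α * ((∏ i, ((b i θ : ℝ):ℂ)) * Complex.exp (-((m-1 : ℤ):ℂ)*Complex.I*θ))
          + β * ((∏ i, ((b i θ : ℝ):ℂ)) * Complex.exp (-((m+1 : ℤ):ℂ)*Complex.I*θ)) := by
      intro θ
      rw [Fin.prod_univ_succ]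
      rw [hab θ]
      have e1 : Complex.exp ((θ:ℂ)*Complex.I) * Complex.exp (-(m:ℂ)*Complex.I*θ)
          = Complex.exp (-((m-1 : ℤ):ℂ)*Complex.I*θ) := by
        rw [← Complex.exp_add]; congr 1; push_cast; ring
      have e2 : Complex.exp (-(θ:ℂ)*Complex.I) * Complex.exp (-(m:ℂ)*Complex.I*θ)
          = Complex.exp (-((m+1 : ℤ):ℂ)*Complex.I*θ) := by
        rw [← Complex.exp_add]; congr 1; push_cast; ring
      rw [← e1, ← e2]; ring
    rw [intervalIntegral.integral_congr (g := fun θ =>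
        α * ((∏ i, ((b i θ : ℝ):ℂ)) * Complex.exp (-((m-1 : ℤ):ℂ)*Complex.I*θ))
          + β * ((∏ i, ((b i θ : ℝ):ℂ)) * Complex.exp (-((m+1 : ℤ):ℂ)*Complex.I*θ)))
      (fun θ _ => key θ)]
    have i1 : IntervalIntegrable (fun θ : ℝ =>
        α * ((∏ i, ((b i θ : ℝ):ℂ)) * Complex.exp (-((m-1 : ℤ):ℂ)*Complex.I*θ)))
        volume 0 (2*Real.pi) :=
      (continuous_const.mul (hcont.mul (Complex.continuous_exp.comp
        (continuous_const.mul Complex.continuous_ofReal)))).intervalIntegrable _ _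
    have i2 : IntervalIntegrable (fun θ : ℝ =>
        β * ((∏ i, ((b i θ : ℝ):ℂ)) * Complex.exp (-((m+1 : ℤ):ℂ)*Complex.I*θ)))
        volume 0 (2*Real.pi) :=
      (continuous_const.mul (hcont.mul (Complex.continuous_exp.comp
        (continuous_const.mul Complex.continuous_ofReal)))).intervalIntegrable _ _
    rw [intervalIntegral.integral_add i1 i2, intervalIntegral.integral_const_mul,
      intervalIntegral.integral_const_mul]
    have h1 : ∀ t : ℕ, t ≤ n → 2*(t:ℤ) - n ≠ m - 1 := by
      intro t ht h
      exact hm (t+1) (by omega) (by push_cast; push_cast at h; omega)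
    have h2 : ∀ t : ℕ, t ≤ n → 2*(t:ℤ) - n ≠ m + 1 := by
      intro t ht h
      exact hm t (by omega) (by push_cast; push_cast at h; omega)
    rw [ih b hb (m-1) (by exact_mod_cast h1), ih b hb (m+1) (by exact_mod_cast h2)]
    ring



lemma norm_exp_neg_mI (θ : ℝ) (m : ℤ) : ‖Complex.exp (-(m:ℂ)*Complex.I*θ)‖ = 1 := by
  rw [show -(m:ℂ)*Complex.I*θ = ((-(m:ℝ)*θ : ℝ):ℂ) * Complex.I by push_cast; ring]
  rw [Complex.norm_exp_ofReal_mul_I]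

lemma scalar_coeff (g : ℝ × ℝ → ℂ) (hg : AnalyticAt ℝ g 0) (m : ℤ) :
    ∃ (p : ℝ → ℂ) (ε : ℝ), 0 < ε ∧ ε ≤ 1 ∧ AnalyticOnNhd ℝ p (Set.Ioo (-ε) ε) ∧
      ∀ r : ℝ, |r| < ε →
        (2 * Real.pi : ℂ)⁻¹ * ∫ θ in (0:ℝ)..(2*Real.pi),
            g (r * Real.cos θ, r * Real.sin θ) * Complex.exp (-(m:ℂ)*Complex.I*θ)
          = (r : ℂ) ^ m.natAbs * p (r ^ 2) := by
  have pi_pos := Real.pi_pos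
  obtain ⟨ps, ρ, hps⟩ : ∃ ps ρ, HasFPowerSeriesOnBall g ps 0 ρ := by
    obtain ⟨ps, hs⟩ := hg
    obtain ⟨ρ, h⟩ := hs
    exact ⟨ps, ρ, h⟩
  obtain ⟨r0', h0r0', hr0ρ⟩ : ∃ r : ℝ≥0, 0 < r ∧ (r:ℝ≥0∞) < ρ := by
    obtain ⟨r, h1, h2⟩ := ENNReal.lt_iff_exists_nnreal_btwn.mp hps.r_pos
    exact ⟨r, by exact_mod_cast h1, h2⟩
  set r₀ : ℝ≥0 := min r0' 1 with hr₀def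
  have hr₀pos : 0 < r₀ := lt_min h0r0' one_pos
  have hr₀pos' : (0:ℝ) < (r₀:ℝ) := hr₀pos
  have hr₀le1 : (r₀:ℝ) ≤ 1 := by
    have : r₀ ≤ 1 := min_le_right _ _
    exact_mod_cast this
  have hr₀ρ : (r₀:ℝ≥0∞) < ρ :=
    lt_of_le_of_lt (by exact_mod_cast ENNReal.coe_le_coe.mpr (min_le_left _ _)) hr0ρ
  have hr₀rad : (r₀:ℝ≥0∞) < ps.radius := hr₀ρ.trans_le hps.r_le
  obtain ⟨C, hCpos, hC⟩ := ps.norm_mul_pow_le_of_lt_radius hr₀rad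
  -- the unit circle map
  set u : ℝ → ℝ × ℝ := fun θ => (Real.cos θ, Real.sin θ) with hudef
  have hu_norm : ∀ θ, ‖u θ‖ ≤ 1 := by
    intro θ
    rw [Prod.norm_def]
    exact max_le (by simpa [Real.norm_eq_abs] using Real.abs_cos_le_one θ)
      (by simpa [Real.norm_eq_abs] using Real.abs_sin_le_one θ)
  have hu_cont : Continuous u := Real.continuous_cos.prodMk Real.continuous_sin
  have happ_cont : ∀ n : ℕ, Continuous fun θ : ℝ => ps n (fun _ => u θ) :=
    fun n => (ps n).cont.comp (continuous_pi fun _ => hu_cont)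
  have happ_bound : ∀ (n : ℕ) (θ : ℝ), ‖ps n (fun _ => u θ)‖ ≤ ‖ps n‖ := by
    intro n θ
    calc ‖ps n (fun _ => u θ)‖ ≤ ‖ps n‖ * ∏ _i : Fin n, ‖u θ‖ := (ps n).le_opNorm _
      _ ≤ ‖ps n‖ * 1 := by
          gcongr
          exact Finset.prod_le_one (fun _ _ => norm_nonneg _) (fun _ _ => hu_norm θ)
      _ = ‖ps n‖ := mul_one _
  -- the basic integrals
  set J : ℕ → ℂ := fun n =>
    ∫ θ in (0:ℝ)..(2*Real.pi), (ps n fun _ => u θ) * Complex.exp (-(m:ℂ)*Complex.I*θ)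
    with hJdef
  have hJ_cont : ∀ n, Continuous fun θ : ℝ =>
      (ps n fun _ => u θ) * Complex.exp (-(m:ℂ)*Complex.I*θ) := by
    intro n
    exact (happ_cont n).mul (Complex.continuous_exp.comp
      (continuous_const.mul Complex.continuous_ofReal))
  have hJ_bound : ∀ n, ‖J n‖ ≤ 2 * Real.pi * ‖ps n‖ := by
    intro n
    have := intervalIntegral.norm_integral_le_of_norm_le_const
      (C := ‖ps n‖) (a := (0:ℝ)) (b := 2*Real.pi)
      (f := fun θ => (ps n fun _ => u θ) * Complex.exp (-(m:ℂ)*Complex.I*θ)) ?_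
    · calc ‖J n‖ ≤ ‖ps n‖ * |2*Real.pi - 0| := this
        _ = 2 * Real.pi * ‖ps n‖ := by
            rw [sub_zero, abs_of_pos (by positivity)]; ring
    · intro θ _
      rw [norm_mul, norm_exp_neg_mI, mul_one]
      exact happ_bound n θ
  -- vanishing of J off the admissible set
  have hJ_zero : ∀ n : ℕ, (∀ t : ℕ, t ≤ n → 2*(t:ℤ) - n ≠ m) → J n = 0 := by
    intro n hn
    set vecf : Fin 2 → ℝ → ℝ := ![Real.cos, Real.sin] with hvecf
    set basis : Fin 2 → ℝ × ℝ := ![((1:ℝ),(0:ℝ)), ((0:ℝ),(1:ℝ))] with hbasis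
    have hvec_prop : ∀ j : Fin 2, vecf j = Real.cos ∨ vecf j = Real.sin := by
      intro j
      fin_cases j
      · left; rfl
      · right; rfl
    have hexp : ∀ θ : ℝ, (ps n fun _ => u θ) =
        ∑ s : Fin n → Fin 2, (∏ i, vecf (s i) θ) • (ps n fun i => basis (s i)) := by
      intro θ
      have h1 : (fun _ : Fin n => u θ) =
          fun _ : Fin n => ∑ j : Fin 2, vecf j θ • basis j := by
        funext i
        simp [hudef, hvecf, hbasis, Fin.sum_univ_two, Prod.ext_iff]
      rw [h1]
      rw [show (ps n fun _ : Fin n => ∑ j : Fin 2, vecf j θ • basis j)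
          = (ps n).toMultilinearMap fun _ : Fin n => ∑ j : Fin 2, vecf j θ • basis j from rfl,
        MultilinearMap.map_sum]
      apply Finset.sum_congr rfl
      intro s _
      rw [show ((ps n).toMultilinearMap fun i => vecf (s i) θ • basis (s i))
          = (ps n) fun i => vecf (s i) θ • basis (s i) from rfl,
        (ps n).map_smul_univ]
    have : J n = ∑ s : Fin n → Fin 2,
        ∫ θ in (0:ℝ)..(2*Real.pi),
          ((∏ i, vecf (s i) θ) • (ps n fun i => basis (s i)))
            * Complex.exp (-(m:ℂ)*Complex.I*θ) := by
      rw [hJdef]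
      beta_reduce
      rw [intervalIntegral.integral_congr (g := fun θ =>
        ∑ s : Fin n → Fin 2, ((∏ i, vecf (s i) θ) • (ps n fun i => basis (s i)))
            * Complex.exp (-(m:ℂ)*Complex.I*θ)) (fun θ _ => by beta_reduce; rw [hexp θ, Finset.sum_mul])]
      apply intervalIntegral.integral_finset_sum
      intro s _
      apply Continuous.intervalIntegrable
      apply Continuous.mul
      · apply Continuous.fun_smul _ continuous_const
        apply continuous_finset_prod
        intro i _
        rcases hvec_prop (s i) with h | h <;> rw [h] <;> fun_prop
      · exact Complex.continuous_exp.comp (continuous_const.mul Complex.continuous_ofReal)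
    rw [this]
    apply Finset.sum_eq_zero
    intro s _
    have heq : ∀ θ : ℝ, ((∏ i, vecf (s i) θ) • (ps n fun i => basis (s i)))
            * Complex.exp (-(m:ℂ)*Complex.I*θ)
        = (ps n fun i => basis (s i)) *
            ((∏ i, ((vecf (s i) θ : ℝ):ℂ)) * Complex.exp (-(m:ℂ)*Complex.I*θ)) := by
      intro θ
      rw [Complex.real_smul]
      push_cast
      ring
    rw [intervalIntegral.integral_congr (fun θ _ => heq θ),
      intervalIntegral.integral_const_mul,
      trig_orth n (fun i => vecf (s i)) (fun i => hvec_prop (s i)) m hn,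
      mul_zero]
  -- the scalar power series
  set N : ℕ := m.natAbs with hNdef
  set d : ℕ → ℂ := fun l => (2 * Real.pi : ℂ)⁻¹ * J (N + 2*l) with hddef
  have hd_bound : ∀ l, ‖d l‖ ≤ ‖ps (N + 2*l)‖ := by
    intro l
    have h2π : ‖(2 * Real.pi : ℂ)‖ = 2 * Real.pi := by
      rw [show (2 * Real.pi : ℂ) = ((2 * Real.pi : ℝ) : ℂ) by push_cast; ring,
        Complex.norm_real, Real.norm_eq_abs, abs_of_pos (by positivity)]
    calc ‖d l‖ = (2 * Real.pi)⁻¹ * ‖J (N + 2*l)‖ := by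
          rw [hddef]; beta_reduce; rw [norm_mul, norm_inv, h2π]
      _ ≤ (2 * Real.pi)⁻¹ * (2 * Real.pi * ‖ps (N + 2*l)‖) :=
          mul_le_mul_of_nonneg_left (hJ_bound _) (by positivity)
      _ = ‖ps (N + 2*l)‖ := by field_simp
  set P : FormalMultilinearSeries ℂ ℂ ℂ := FormalMultilinearSeries.ofScalars ℂ d with hPdef
  have hP_radius : ((r₀^2 : ℝ≥0) : ℝ≥0∞) ≤ P.radius := by
    apply FormalMultilinearSeries.le_radius_of_bound _ (C / (r₀:ℝ)^N)
    intro l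
    rw [hPdef, FormalMultilinearSeries.ofScalars_norm]
    have h1 : ‖d l‖ * ((r₀^2 : ℝ≥0) : ℝ)^l ≤ ‖ps (N + 2*l)‖ * (r₀:ℝ)^(2*l) := by
      push_cast
      rw [← pow_mul]
      exact mul_le_mul_of_nonneg_right (hd_bound l) (by positivity)
    calc ‖d l‖ * ((r₀^2 : ℝ≥0) : ℝ)^l ≤ ‖ps (N + 2*l)‖ * (r₀:ℝ)^(2*l) := h1
      _ = (‖ps (N + 2*l)‖ * (r₀:ℝ)^(N + 2*l)) / (r₀:ℝ)^N := by
          rw [pow_add]; field_simp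
      _ ≤ C / (r₀:ℝ)^N := by gcongr; exact hC _
  have hP_pos : 0 < P.radius := lt_of_lt_of_le (by exact_mod_cast pow_pos hr₀pos 2) hP_radius
  have hPball := P.hasFPowerSeriesOnBall hP_pos
  set ε : ℝ := (r₀:ℝ)^2/2 with hεdef
  have hεpos : 0 < ε := by positivity
  have hεle1 : ε ≤ 1 := by
    rw [hεdef]
    nlinarith [hr₀le1, hr₀pos']
  have hεr₀ : ε ≤ (r₀:ℝ)/2 := by
    rw [hεdef]
    nlinarith [hr₀le1, hr₀pos']
  refine ⟨fun s : ℝ => P.sum ((s:ℝ):ℂ), ε, hεpos, hεle1, ?_, ?_⟩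
  · -- analyticity of p
    intro y hy
    have hy' : |y| < ε := by
      rw [abs_lt]; exact ⟨hy.1, hy.2⟩
    have hmem : ((y:ℝ):ℂ) ∈ Metric.eball (0:ℂ) P.radius := by
      rw [Metric.mem_eball, edist_zero_right]
      calc (‖((y:ℝ):ℂ)‖₊ : ℝ≥0∞) < ((r₀^2 : ℝ≥0) : ℝ≥0∞) := by
            rw [ENNReal.coe_lt_coe, ← NNReal.coe_lt_coe, coe_nnnorm, Complex.norm_real,
              Real.norm_eq_abs]
            push_cast
            calc |y| < ε := hy'
              _ ≤ (r₀:ℝ)^2 := by rw [hεdef]; nlinarith [hr₀pos']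
        _ ≤ P.radius := hP_radius
    have hPy : AnalyticAt ℂ P.sum ((y:ℝ):ℂ) := hPball.analyticOnNhd _ hmem
    have := (hPy.restrictScalars (𝕜 := ℝ)).comp (Complex.ofRealCLM.analyticAt y)
    simpa [Function.comp_def] using this
  · -- the formula
    intro r hr
    have hrr₀ : |r| < (r₀:ℝ) := lt_of_lt_of_le hr (hεr₀.trans (by nlinarith [hr₀pos']))
    have hrhalf : |r| ≤ (r₀:ℝ)/2 := le_of_lt (lt_of_lt_of_le hr hεr₀)
    -- the polar point is in the ball
    have hv_norm : ∀ θ, ‖((r * Real.cos θ, r * Real.sin θ) : ℝ×ℝ)‖ ≤ |r| := by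
      intro θ
      rw [Prod.norm_def]
      apply max_le
      · rw [Real.norm_eq_abs, abs_mul]
        exact mul_le_of_le_one_right (abs_nonneg r) (Real.abs_cos_le_one θ)
      · rw [Real.norm_eq_abs, abs_mul]
        exact mul_le_of_le_one_right (abs_nonneg r) (Real.abs_sin_le_one θ)
    have hsum_ptwise : ∀ θ : ℝ, HasSum
        (fun n => (ps n fun _ => ((r * Real.cos θ, r * Real.sin θ) : ℝ×ℝ))
          * Complex.exp (-(m:ℂ)*Complex.I*θ))
        (g (r * Real.cos θ, r * Real.sin θ) * Complex.exp (-(m:ℂ)*Complex.I*θ)) := by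
      intro θ
      have hmem : ((r * Real.cos θ, r * Real.sin θ) : ℝ×ℝ) ∈ Metric.eball (0:ℝ×ℝ) ρ := by
        rw [Metric.mem_eball, edist_zero_right]
        calc (‖((r * Real.cos θ, r * Real.sin θ) : ℝ×ℝ)‖₊ : ℝ≥0∞) < (r₀ : ℝ≥0∞) := by
              rw [ENNReal.coe_lt_coe, ← NNReal.coe_lt_coe, coe_nnnorm]
              exact lt_of_le_of_lt (hv_norm θ) hrr₀
          _ < ρ := hr₀ρ
      have := (hps.hasSum hmem).mul_right (Complex.exp (-(m:ℂ)*Complex.I*θ))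
      simpa using this
    -- convert polar point application
    have hsmul : ∀ (n : ℕ) (θ : ℝ),
        (ps n fun _ => ((r * Real.cos θ, r * Real.sin θ) : ℝ×ℝ))
          = (r^n : ℝ) • (ps n fun _ => u θ) := by
      intro n θ
      have h1 : (fun _ : Fin n => ((r * Real.cos θ, r * Real.sin θ) : ℝ×ℝ))
          = fun i : Fin n => (fun _ : Fin n => r) i • (fun _ : Fin n => u θ) i := by
        funext i
        simp [hudef, Prod.ext_iff]
      rw [h1, (ps n).map_smul_univ]
      simp
    -- the measure
    set μ : Measure ℝ := volume.restrict (Set.Ioc (0:ℝ) (2*Real.pi)) with hμdef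
    have hle : (0:ℝ) ≤ 2*Real.pi := by positivity
    have hconv : ∀ f : ℝ → ℂ, (∫ θ in (0:ℝ)..(2*Real.pi), f θ) = ∫ θ, f θ ∂μ := by
      intro f
      rw [intervalIntegral.integral_of_le hle]
    set F : ℕ → ℝ → ℂ := fun n θ =>
      (ps n fun _ => ((r * Real.cos θ, r * Real.sin θ) : ℝ×ℝ))
        * Complex.exp (-(m:ℂ)*Complex.I*θ) with hFdef
    have hF_cont : ∀ n, Continuous (F n) := by
      intro n
      apply Continuous.mul
      · exact (ps n).cont.comp (continuous_pi fun _ =>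
          ((continuous_const.mul Real.continuous_cos).prodMk
            (continuous_const.mul Real.continuous_sin)))
      · exact Complex.continuous_exp.comp (continuous_const.mul Complex.continuous_ofReal)
    have hF_int : ∀ n, Integrable (F n) μ := by
      intro n
      rw [hμdef]
      exact (intervalIntegrable_iff_integrableOn_Ioc_of_le hle).mp
        ((hF_cont n).intervalIntegrable _ _)
    have hF_norm : ∀ (n : ℕ) (θ : ℝ), ‖F n θ‖ ≤ C * (1/2:ℝ)^n := by
      intro n θ
      rw [hFdef]
      simp only []
      rw [norm_mul, norm_exp_neg_mI, mul_one, hsmul n θ, norm_smul,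
        Real.norm_eq_abs, abs_pow]
      calc |r|^n * ‖ps n fun _ => u θ‖ ≤ ((r₀:ℝ)/2)^n * ‖ps n‖ :=
            mul_le_mul (pow_le_pow_left₀ (abs_nonneg r) hrhalf n) (happ_bound n θ)
              (norm_nonneg _) (pow_nonneg (div_nonneg r₀.coe_nonneg (by norm_num)) n)
        _ = (‖ps n‖ * (r₀:ℝ)^n) * (1/2:ℝ)^n := by
            rw [show ((r₀:ℝ)/2)^n = (r₀:ℝ)^n * (1/2:ℝ)^n by rw [← mul_pow]; congr 1; ring]
            ring
        _ ≤ C * (1/2:ℝ)^n := by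
            gcongr
            exact hC n
    have hμuniv : (μ Set.univ).toReal = 2*Real.pi := by
      rw [hμdef, Measure.restrict_apply_univ, Real.volume_Ioc,
        ENNReal.toReal_ofReal (by linarith)]
      ring
    have hgeom : Summable fun n : ℕ => (2*Real.pi) * (C * (1/2:ℝ)^n) :=
      (summable_geometric_two.mul_left C).mul_left (2*Real.pi)
    have hbound : ∀ n : ℕ, (∫ θ, ‖F n θ‖ ∂μ) ≤ (2*Real.pi) * (C * (1/2:ℝ)^n) := by
      intro n
      calc (∫ θ, ‖F n θ‖ ∂μ) ≤ ∫ _θ, C * (1/2:ℝ)^n ∂μ := by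
            apply integral_mono_of_nonneg
              (Filter.Eventually.of_forall fun θ => norm_nonneg _)
              (integrable_const _)
              (Filter.Eventually.of_forall fun θ => hF_norm n θ)
        _ = (2*Real.pi) * (C * (1/2:ℝ)^n) := by
            rw [MeasureTheory.integral_const, smul_eq_mul, measureReal_def, hμuniv]
    have hF_sumnorm : Summable fun n => ∫ θ, ‖F n θ‖ ∂μ :=
      Summable.of_nonneg_of_le (fun n => integral_nonneg fun θ => norm_nonneg _) hbound hgeom
    have hbig : HasSum (fun n => ∫ θ, F n θ ∂μ)
        (∫ θ, (∑' n, F n θ) ∂μ) :=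
      hasSum_integral_of_summable_integral_norm hF_int hF_sumnorm
    have htsum_eq : ∀ θ : ℝ, (∑' n, F n θ)
        = g (r * Real.cos θ, r * Real.sin θ) * Complex.exp (-(m:ℂ)*Complex.I*θ) :=
      fun θ => (hsum_ptwise θ).tsum_eq
    have hFint_val : ∀ n, (∫ θ, F n θ ∂μ) = ((r:ℂ)^n) * J n := by
      intro n
      rw [← hconv (F n)]
      have : ∀ θ : ℝ, F n θ = ((r:ℂ)^n) *
          ((ps n fun _ => u θ) * Complex.exp (-(m:ℂ)*Complex.I*θ)) := by
        intro θ
        rw [hFdef]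
        simp only []
        rw [hsmul n θ, Complex.real_smul]
        push_cast
        ring
      rw [intervalIntegral.integral_congr (fun θ _ => this θ),
        intervalIntegral.integral_const_mul]
    have hbig2 : HasSum (fun n => ((r:ℂ)^n) * J n)
        (∫ θ in (0:ℝ)..(2*Real.pi),
          g (r * Real.cos θ, r * Real.sin θ) * Complex.exp (-(m:ℂ)*Complex.I*θ)) := by
      rw [hconv, integral_congr_ae (Filter.Eventually.of_forall fun θ => (htsum_eq θ).symm)]
      have heq : (fun n => ∫ θ, F n θ ∂μ) = fun n => ((r:ℂ)^n) * J n := funext hFint_val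
      rw [← heq]
      exact hbig
    -- now reindex the sum
    set f : ℕ → ℂ := fun n => (r:ℂ)^n * ((2 * Real.pi : ℂ)⁻¹ * J n) with hfdef
    set e : ℕ → ℕ := fun l => N + 2*l with hedef
    have he_inj : Function.Injective e := by
      intro a b h
      simp only [hedef] at h
      omega
    have hsupp : Function.support f ⊆ Set.range e := by
      intro n hn
      by_contra hout
      apply hn
      have hz : J n = 0 := by
        apply hJ_zero
        intro t ht h2t
        apply hout
        refine ⟨(n - N)/2, ?_⟩
        simp only [hedef]
        omega
      rw [hfdef]
      simp [hz]
    calc (2 * Real.pi : ℂ)⁻¹ * ∫ θ in (0:ℝ)..(2*Real.pi),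
            g (r * Real.cos θ, r * Real.sin θ) * Complex.exp (-(m:ℂ)*Complex.I*θ)
        = (2 * Real.pi : ℂ)⁻¹ * ∑' n, ((r:ℂ)^n) * J n := by rw [← hbig2.tsum_eq]
      _ = ∑' n, f n := by
          rw [← tsum_mul_left]
          apply tsum_congr
          intro n
          rw [hfdef]
          ring
      _ = ∑' l, f (e l) := (he_inj.tsum_eq hsupp).symm
      _ = (r:ℂ)^N * ∑' l, (((r:ℂ)^2)^l * ((2 * Real.pi : ℂ)⁻¹ * J (N + 2*l))) := by
          rw [← tsum_mul_left]
          apply tsum_congr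
          intro l
          rw [hfdef, hedef]
          simp only []
          rw [pow_add, pow_mul]
          ring
      _ = (r:ℂ)^(m.natAbs) * P.sum (((r^2 : ℝ)):ℂ) := by
          rw [← hNdef]
          congr 1
          rw [FormalMultilinearSeries.sum]
          apply tsum_congr
          intro l
          rw [hPdef, FormalMultilinearSeries.ofScalars_apply_eq, smul_eq_mul, hddef]
          push_cast
          ring
lemma combo_plus (a b c s : ℝ) :
    ((a*c + b*s : ℝ):ℂ) + Complex.I * ((-a*s + b*c : ℝ):ℂ)
      = ((a:ℂ) + Complex.I * (b:ℂ)) * (((c:ℝ):ℂ) - ((s:ℝ):ℂ) * Complex.I) := by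
  push_cast
  linear_combination ((b:ℂ)*(s:ℂ)) * Complex.I_sq

lemma combo_minus (a b c s : ℝ) :
    ((a*c + b*s : ℝ):ℂ) - Complex.I * ((-a*s + b*c : ℝ):ℂ)
      = ((a:ℂ) - Complex.I * (b:ℂ)) * (((c:ℝ):ℂ) + ((s:ℝ):ℂ) * Complex.I) := by
  push_cast
  linear_combination ((b:ℂ)*(s:ℂ)) * Complex.I_sq

lemma exp_shift_plus (m : ℤ) (θ : ℝ) :
    Complex.exp (-(((m+1 : ℤ) : ℤ):ℂ)*Complex.I*θ)
      = (((Real.cos θ:ℝ):ℂ) - ((Real.sin θ:ℝ):ℂ)*Complex.I)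
          * Complex.exp (-(m:ℂ)*Complex.I*θ) := by
  have h : (((Real.cos θ:ℝ):ℂ) - ((Real.sin θ:ℝ):ℂ)*Complex.I)
      = Complex.exp ((-(θ:ℂ)) * Complex.I) := by
    rw [Complex.exp_mul_I, Complex.cos_neg, Complex.sin_neg, ← Complex.ofReal_cos,
      ← Complex.ofReal_sin]
    ring
  rw [h, ← Complex.exp_add]
  congr 1
  push_cast
  ring

lemma exp_shift_minus (m : ℤ) (θ : ℝ) :
    Complex.exp (-(((m-1 : ℤ) : ℤ):ℂ)*Complex.I*θ)
      = (((Real.cos θ:ℝ):ℂ) + ((Real.sin θ:ℝ):ℂ)*Complex.I)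
          * Complex.exp (-(m:ℂ)*Complex.I*θ) := by
  have h : (((Real.cos θ:ℝ):ℂ) + ((Real.sin θ:ℝ):ℂ)*Complex.I)
      = Complex.exp ((θ:ℂ) * Complex.I) := by
    rw [Complex.exp_mul_I, ← Complex.ofReal_cos, ← Complex.ofReal_sin]
  rw [h, ← Complex.exp_add]
  congr 1
  push_cast
  ring

lemma polar_mem_ball {r : ℝ} (hr : |r| < 1) (θ : ℝ) :
    ((r*Real.cos θ, r*Real.sin θ) : ℝ×ℝ) ∈ Metric.ball (0:ℝ×ℝ) 1 := by
  rw [Metric.mem_ball, dist_zero_right, Prod.norm_def]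
  apply max_lt
  · rw [Real.norm_eq_abs, abs_mul]
    exact lt_of_le_of_lt (mul_le_of_le_one_right (abs_nonneg r) (Real.abs_cos_le_one θ)) hr
  · rw [Real.norm_eq_abs, abs_mul]
    exact lt_of_le_of_lt (mul_le_of_le_one_right (abs_nonneg r) (Real.abs_sin_le_one θ)) hr
/-- The `m`-th Fourier coefficient of a scalar function on the disk given in polar
coordinates: `g^m(r) = (1/2π) ∫₀^{2π} g(r,θ) e^{-imθ} dθ`. -/
noncomputable def polarFourierCoeff (g : ℝ → ℝ → ℝ) (m : ℤ) (r : ℝ) : ℂ :=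
  (2 * Real.pi : ℂ)⁻¹ *
    ∫ θ in (0:ℝ)..(2 * Real.pi), (g r θ : ℂ) * Complex.exp (-(m : ℂ) * Complex.I * θ)

/-- a vector field `F = F_x ê_x + F_y ê_y` analytic at the origin of `ℝ²`
has polar components `F_r = F_x cos θ + F_y sin θ`, `F_θ = −F_x sin θ + F_y cos θ`
whose Fourier coefficients are of the form `F_r^m(r) = r^{|m∓1|} p_r(r²)`,
`F_θ^m(r) = r^{|m∓1|} p_θ(r²)`; equivalently, the combinations `F_r^m ± i F_θ^m`
satisfy the scalar regularity condition with azimuthal indices `m ± 1`: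
`(F_r^m + iF_θ^m)(r) = r^{|m+1|} p(r²)` and `(F_r^m − iF_θ^m)(r) = r^{|m−1|} q(r²)`
for analytic `p, q`. -/
theorem stmt_13 (Fx Fy : ℝ × ℝ → ℝ)
    (hFx : AnalyticOnNhd ℝ Fx (Metric.ball (0 : ℝ × ℝ) 1))
    (hFy : AnalyticOnNhd ℝ Fy (Metric.ball (0 : ℝ × ℝ) 1))
    (Fr Fθ : ℝ → ℝ → ℝ)
    (hFr : Fr = fun r θ => Fx (r * Real.cos θ, r * Real.sin θ) * Real.cos θ +
        Fy (r * Real.cos θ, r * Real.sin θ) * Real.sin θ)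
    (hFθ : Fθ = fun r θ => -Fx (r * Real.cos θ, r * Real.sin θ) * Real.sin θ +
        Fy (r * Real.cos θ, r * Real.sin θ) * Real.cos θ)
    (m : ℤ) :
    ∃ (p q : ℝ → ℂ) (ε : ℝ), 0 < ε ∧
      AnalyticOnNhd ℝ p (Set.Ioo (-ε) ε) ∧ AnalyticOnNhd ℝ q (Set.Ioo (-ε) ε) ∧
      ∀ r : ℝ, |r| < ε →
        polarFourierCoeff Fr m r + Complex.I * polarFourierCoeff Fθ m r =
          (r : ℂ) ^ (m + 1).natAbs * p (r ^ 2) ∧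
        polarFourierCoeff Fr m r - Complex.I * polarFourierCoeff Fθ m r =
          (r : ℂ) ^ (m - 1).natAbs * q (r ^ 2) := by
  have h0 : (0:ℝ×ℝ) ∈ Metric.ball (0:ℝ×ℝ) 1 := by simp
  have hFx0 : AnalyticAt ℝ Fx 0 := hFx 0 h0
  have hFy0 : AnalyticAt ℝ Fy 0 := hFy 0 h0
  have hFxC : AnalyticAt ℝ (fun v : ℝ×ℝ => ((Fx v : ℝ):ℂ)) 0 := by
    simpa [Function.comp_def] using (Complex.ofRealCLM.analyticAt (Fx 0)).comp hFx0
  have hFyC : AnalyticAt ℝ (fun v : ℝ×ℝ => ((Fy v : ℝ):ℂ)) 0 := by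
    simpa [Function.comp_def] using (Complex.ofRealCLM.analyticAt (Fy 0)).comp hFy0
  have hg₁ : AnalyticAt ℝ (fun v : ℝ×ℝ => ((Fx v : ℝ):ℂ) + Complex.I * ((Fy v : ℝ):ℂ)) 0 :=
    hFxC.add (analyticAt_const.mul hFyC)
  have hg₂ : AnalyticAt ℝ (fun v : ℝ×ℝ => ((Fx v : ℝ):ℂ) - Complex.I * ((Fy v : ℝ):ℂ)) 0 :=
    hFxC.sub (analyticAt_const.mul hFyC)
  obtain ⟨p, ε₁, hε₁, hε₁1, hp, hpeq⟩ := scalar_coeff _ hg₁ (m+1)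
  obtain ⟨q, ε₂, hε₂, hε₂1, hq, hqeq⟩ := scalar_coeff _ hg₂ (m-1)
  refine ⟨p, q, min ε₁ ε₂, lt_min hε₁ hε₂,
    hp.mono (Set.Ioo_subset_Ioo (by simp)
      (min_le_left _ _)),
    hq.mono (Set.Ioo_subset_Ioo (by simp)
      (min_le_right _ _)), ?_⟩
  intro r hr
  have hr1 : |r| < ε₁ := lt_of_lt_of_le hr (min_le_left _ _)
  have hr2 : |r| < ε₂ := lt_of_lt_of_le hr (min_le_right _ _)
  have hrlt1 : |r| < 1 := lt_of_lt_of_le hr1 hε₁1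
  -- continuity facts
  have hcFx : Continuous fun θ : ℝ => Fx (r*Real.cos θ, r*Real.sin θ) := by
    apply hFx.continuousOn.comp_continuous (by fun_prop)
    exact fun θ => polar_mem_ball hrlt1 θ
  have hcFy : Continuous fun θ : ℝ => Fy (r*Real.cos θ, r*Real.sin θ) := by
    apply hFy.continuousOn.comp_continuous (by fun_prop)
    exact fun θ => polar_mem_ball hrlt1 θ
  have hexpc : Continuous fun θ : ℝ => Complex.exp (-(m:ℂ)*Complex.I*θ) :=
    Complex.continuous_exp.comp (continuous_const.mul Complex.continuous_ofReal)
  have hA : IntervalIntegrable (fun θ : ℝ => ((Fr r θ : ℝ):ℂ)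
      * Complex.exp (-(m:ℂ)*Complex.I*θ)) volume 0 (2*Real.pi) := by
    apply Continuous.intervalIntegrable
    apply Continuous.mul _ hexpc
    apply Complex.continuous_ofReal.comp
    rw [hFr]
    exact (hcFx.mul Real.continuous_cos).add (hcFy.mul Real.continuous_sin)
  have hB : IntervalIntegrable (fun θ : ℝ => ((Fθ r θ : ℝ):ℂ)
      * Complex.exp (-(m:ℂ)*Complex.I*θ)) volume 0 (2*Real.pi) := by
    apply Continuous.intervalIntegrable
    apply Continuous.mul _ hexpc
    apply Complex.continuous_ofReal.comp
    rw [hFθ]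
    exact ((hcFx.neg.mul Real.continuous_sin)).add (hcFy.mul Real.continuous_cos)
  constructor
  · rw [← hpeq r hr1]
    rw [polarFourierCoeff, polarFourierCoeff]
    have step1 : (2 * Real.pi : ℂ)⁻¹ *
          (∫ θ in (0:ℝ)..(2*Real.pi), ((Fr r θ : ℝ):ℂ) * Complex.exp (-(m:ℂ)*Complex.I*θ))
        + Complex.I * ((2 * Real.pi : ℂ)⁻¹ *
          ∫ θ in (0:ℝ)..(2*Real.pi), ((Fθ r θ : ℝ):ℂ) * Complex.exp (-(m:ℂ)*Complex.I*θ))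
        = (2 * Real.pi : ℂ)⁻¹ *
          ∫ θ in (0:ℝ)..(2*Real.pi),
            (((Fr r θ : ℝ):ℂ) * Complex.exp (-(m:ℂ)*Complex.I*θ)
              + Complex.I * (((Fθ r θ : ℝ):ℂ) * Complex.exp (-(m:ℂ)*Complex.I*θ))) := by
      rw [intervalIntegral.integral_add hA (hB.const_mul Complex.I),
        intervalIntegral.integral_const_mul]
      ring
    rw [step1]
    congr 1
    apply intervalIntegral.integral_congr
    intro θ _
    rw [hFr, hFθ]
    beta_reduce
    rw [exp_shift_plus m θ]
    have hfac := combo_plus (Fx (r*Real.cos θ, r*Real.sin θ)) (Fy (r*Real.cos θ, r*Real.sin θ))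
      (Real.cos θ) (Real.sin θ)
    linear_combination Complex.exp (-(m:ℂ)*Complex.I*θ) * hfac
  · rw [← hqeq r hr2]
    rw [polarFourierCoeff, polarFourierCoeff]
    have step1 : (2 * Real.pi : ℂ)⁻¹ *
          (∫ θ in (0:ℝ)..(2*Real.pi), ((Fr r θ : ℝ):ℂ) * Complex.exp (-(m:ℂ)*Complex.I*θ))
        - Complex.I * ((2 * Real.pi : ℂ)⁻¹ *
          ∫ θ in (0:ℝ)..(2*Real.pi), ((Fθ r θ : ℝ):ℂ) * Complex.exp (-(m:ℂ)*Complex.I*θ))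
        = (2 * Real.pi : ℂ)⁻¹ *
          ∫ θ in (0:ℝ)..(2*Real.pi),
            (((Fr r θ : ℝ):ℂ) * Complex.exp (-(m:ℂ)*Complex.I*θ)
              - Complex.I * (((Fθ r θ : ℝ):ℂ) * Complex.exp (-(m:ℂ)*Complex.I*θ))) := by
      rw [intervalIntegral.integral_sub hA (hB.const_mul Complex.I),
        intervalIntegral.integral_const_mul]
      ring
    rw [step1]
    congr 1
    apply intervalIntegral.integral_congr
    intro θ _
    rw [hFr, hFθ]
    beta_reduce
    rw [exp_shift_minus m θ]
    have hfac := combo_minus (Fx (r*Real.cos θ, r*Real.sin θ)) (Fy (r*Real.cos θ, r*Real.sin θ))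
      (Real.cos θ) (Real.sin θ)
    linear_combination Complex.exp (-(m:ℂ)*Complex.I*θ) * hfac
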